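/- Let (G,L) be a minimal list-obstruction (lists are subsets of {1,2,3}), let R be an induced subgraph of G, and let {L_1,…,L_m} be a refinement of L with respect to R. For each i, let (G_i, L_i) be a minimal list-obstruction induced by (G, L_i). Then V(G) = V(R) ∪ ⋃_{i=1}^m V(G_i). In particular, if each G_i satisfies |V(G_i) \ V(R)| ≤ k, then |V(G)| ≤ |V(R)| + k·m. -/

import Mathlib

def ListColorableOn {V : Type*} (G : SimpleGraph V) (L : V → Finset ℕ) (S : Set V) : Prop :=
  ∃ c : V → ℕ, (∀ v ∈ S, c v ∈ L v) ∧ ∀ u ∈ S, ∀ w ∈ S, G.Adj u w → c u ≠ c w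

def MinimalListObstruction {V : Type*} (G : SimpleGraph V) (L : V → Finset ℕ) : Prop :=
  ¬ ListColorableOn G L Set.univ ∧ ∀ S : Set V, S ≠ Set.univ → ListColorableOn G L S

def MinimalListObstructionOn {V : Type*} (G : SimpleGraph V) (L : V → Finset ℕ)
    (S : Set V) : Prop :=
  ¬ ListColorableOn G L S ∧ ∀ T : Set V, T ⊂ S → ListColorableOn G L T

lemma aux_ncard_iUnion_le {V : Type*} [Fintype V] :
    ∀ (m : ℕ) (T : Fin m → Set V), (⋃ i, T i).ncard ≤ ∑ i, (T i).ncard := by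
  intro m
  induction m with
  | zero => simp
  | succ n ih =>
    intro T
    rw [Fin.sum_univ_succ]
    have h : (⋃ i, T i) = T 0 ∪ ⋃ i : Fin n, T i.succ := by
      ext x; simp [Fin.exists_fin_succ]
    rw [h]
    exact le_trans (Set.ncard_union_le _ _) (Nat.add_le_add_left (ih _) _)

theorem stmt_17 {V : Type*} [Fintype V] (G : SimpleGraph V) (L : V → Finset ℕ)
    (hmin : MinimalListObstruction G L)
    (R : Set V) (m : ℕ) (Ls : Fin m → V → Finset ℕ) (RL : Fin m → Set V)
    -- `{Ls i}` is a refinement of `L` with respect to `R`: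
    (hRL : ∀ i, RL i ⊆ R)
    (h1 : ∀ i, ∀ v ∈ RL i, (Ls i v).card = 1)
    (h2a : ∀ i, ∀ v, v ∉ RL i → Ls i v = L v)
    (h2b : ∀ i, ∀ v ∈ RL i, Ls i v ⊆ L v)
    (h3 : ∀ c : V → ℕ, (∀ v ∈ R, c v ∈ L v) →
      (∀ u ∈ R, ∀ w ∈ R, G.Adj u w → c u ≠ c w) → ∃ i, ∀ v ∈ RL i, c v ∈ Ls i v)
    -- minimal list-obstructions induced by the `(G, Ls i)`:
    (S : Fin m → Set V) (hS : ∀ i, MinimalListObstructionOn G (Ls i) (S i)) :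
    (Set.univ : Set V) = R ∪ ⋃ i, S i ∧
    ∀ k : ℕ, (∀ i, (S i \ R).ncard ≤ k) → Fintype.card V ≤ R.ncard + k * m := by
  have key : (Set.univ : Set V) = R ∪ ⋃ i, S i := by
    apply Set.eq_of_subset_of_subset _ (Set.subset_univ _)
    intro v _
    by_contra hv
    simp only [Set.mem_union, Set.mem_iUnion, not_or, not_exists] at hv
    obtain ⟨hvR, hvS⟩ := hv
    have hne : ({v}ᶜ : Set V) ≠ Set.univ := by
      intro h
      have : v ∈ ({v}ᶜ : Set V) := h ▸ Set.mem_univ v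
      exact this rfl
    obtain ⟨c, hc1, hc2⟩ := hmin.2 ({v}ᶜ) hne
    have hmem : ∀ u : V, u ≠ v → u ∈ ({v}ᶜ : Set V) := fun u hu => hu
    have hcR : ∀ u ∈ R, c u ∈ L u := fun u hu =>
      hc1 u (hmem u (fun h => hvR (h ▸ hu)))
    have hcRp : ∀ u ∈ R, ∀ w ∈ R, G.Adj u w → c u ≠ c w := fun u hu w hw =>
      hc2 u (hmem u (fun h => hvR (h ▸ hu))) w (hmem w (fun h => hvR (h ▸ hw)))
    obtain ⟨i, hi⟩ := h3 c hcR hcRp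
    apply (hS i).1
    refine ⟨c, ?_, ?_⟩
    · intro u hu
      by_cases hu' : u ∈ RL i
      · exact hi u hu'
      · rw [h2a i u hu']
        exact hc1 u (hmem u (fun h => hvS i (h ▸ hu)))
    · intro u hu w hw
      exact hc2 u (hmem u (fun h => hvS i (h ▸ hu))) w (hmem w (fun h => hvS i (h ▸ hw)))
  refine ⟨key, ?_⟩
  intro k hk
  have key2 : (Set.univ : Set V) = R ∪ ⋃ i, (S i \ R) := by
    rw [key]
    ext x
    simp only [Set.mem_union, Set.mem_iUnion, Set.mem_diff]
    constructor
    · rintro (h | ⟨i, hi⟩)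
      · exact Or.inl h
      · by_cases hx : x ∈ R
        · exact Or.inl hx
        · exact Or.inr ⟨i, hi, hx⟩
    · rintro (h | ⟨i, hi, _⟩)
      · exact Or.inl h
      · exact Or.inr ⟨i, hi⟩
  have : Fintype.card V = (Set.univ : Set V).ncard := by
    rw [Set.ncard_univ, Nat.card_eq_fintype_card]
  rw [this, key2]
  calc (R ∪ ⋃ i, (S i \ R)).ncard ≤ R.ncard + (⋃ i, (S i \ R)).ncard :=
        Set.ncard_union_le _ _
    _ ≤ R.ncard + ∑ i, (S i \ R).ncard :=
        Nat.add_le_add_left (aux_ncard_iUnion_le m _) _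
    _ ≤ R.ncard + ∑ _i : Fin m, k :=
        Nat.add_le_add_left (Finset.sum_le_sum (fun i _ => hk i)) _
    _ = R.ncard + k * m := by simp [Finset.sum_const, Nat.mul_comm]
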